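/- Let k ≥ 2, and set φ_0(x) = (−1)^m/(2k−1)^m if |x| = 2m is even, and φ_0(x) = 0 if |x| is odd. Then φ_0 ∈ ℓ^p(F_k) for every p > 2, and χ_1 ∗ φ_0 = 0, i.e., ∑_{y ∈ E_1} φ_0(xy) = 0 for all x ∈ F_k. -/

import Mathlib

/-- The sphere of radius `n` about the identity in the free group `F_k`:
the finite set of elements of reduced word length `n`. -/
noncomputable def sphere (k n : ℕ) : Finset (FreeGroup (Fin k)) :=
  (Set.Finite.preimage (Function.Injective.injOn FreeGroup.toWord_injective)
    (List.finite_length_eq ((Fin k) × Bool) n)).toFinset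

/-- `χ_n = ∑_{|x| = n} x`, the sum of the sphere of radius `n` in `ℂ[F_k]`. -/
noncomputable def chi (k n : ℕ) : MonoidAlgebra ℂ (FreeGroup (Fin k)) :=
  ∑ x ∈ sphere k n, MonoidAlgebra.of ℂ (FreeGroup (Fin k)) x

/-- The polynomials `p_0 = 1`, `p_1 = z`, `p_2 = z² - 2k`,
`p_{n+1} = z p_n - (2k-1) p_{n-1}` for `n ≥ 2`. -/
noncomputable def p (k : ℕ) : ℕ → Polynomial ℂ
  | 0 => 1
  | 1 => Polynomial.X
  | 2 => Polynomial.X ^ 2 - Polynomial.C ((2 * k : ℕ) : ℂ)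
  | (n + 3) => Polynomial.X * p k (n + 2) - Polynomial.C ((2 * k - 1 : ℕ) : ℂ) * p k (n + 1)

/-- `e_0 = 1` and `e_n = 2k(2k-1)^{n-1}` for `n ≥ 1`, the cardinality of the sphere. -/
def eN (k n : ℕ) : ℕ := if n = 0 then 1 else 2 * k * (2 * k - 1) ^ (n - 1)

/-- `φ_0(x) = (-1)^m/(2k-1)^m` if `|x| = 2m`, and `0` if `|x|` is odd. -/
noncomputable def phizero (k : ℕ) : FreeGroup (Fin k) → ℂ := fun x =>
  if Even x.toWord.length then
    (-1 : ℂ) ^ (x.toWord.length / 2) / ((2 * k - 1 : ℕ) : ℂ) ^ (x.toWord.length / 2)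
  else 0

section Helpers

open FreeGroup List

variable {α : Type*} [DecidableEq α]

lemma red_cons_aux {z : α × Bool} {L : List (α × Bool)}
    (h : FreeGroup.reduce (z :: L) = z :: L) :
    FreeGroup.reduce L = L ∧ ∀ y ∈ L.head?, ¬(z.1 = y.1 ∧ z.2 = !y.2) := by
  rw [FreeGroup.reduce.cons] at h
  rcases hr : FreeGroup.reduce L with _ | ⟨y, ys⟩ <;> rw [hr] at h
  · have hL : L = [] := by injection h with h1 h2; exact h2.symm
    subst hL; simp [hr]
  · by_cases hc : z.1 = y.1 ∧ z.2 = !y.2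
    · simp only [hc, if_true] at h
      have hlen := congrArg List.length h
      have hle : (FreeGroup.reduce L).length ≤ L.length := FreeGroup.reduce.red.length_le
      rw [hr] at hle
      simp at hlen hle
      omega
    · simp only [hc, if_false] at h
      have hL : L = y :: ys := by injection h with h1 h2; exact h2.symm
      constructor
      · rw [hL]
      · intro w hw
        rw [hL] at hw; simp at hw; subst hw; exact hc

lemma reduce_append (x : α × Bool) : ∀ (L : List (α × Bool)), FreeGroup.reduce L = L →
    FreeGroup.reduce (L ++ [x]) =
      if L.getLast? = some (x.1, !x.2) then L.dropLast else L ++ [x]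
  | [], _ => by simp [FreeGroup.reduce_singleton]
  | z :: L, h => by
    obtain ⟨hL, hnc⟩ := red_cons_aux h
    have IH := reduce_append x L hL
    rcases L with _ | ⟨y, ys⟩
    · simp only [List.nil_append, List.cons_append]
      rw [FreeGroup.reduce.cons, FreeGroup.reduce_singleton]
      by_cases hc : z.1 = x.1 ∧ z.2 = !x.2
      · have hz : z = (x.1, !x.2) := Prod.ext hc.1 hc.2
        rw [if_pos (by rw [List.getLast?_singleton, hz])]
        show (if z.1 = x.1 ∧ z.2 = !x.2 then ([] : List (α × Bool)) else z :: x :: []) = _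
        rw [if_pos hc]
        rfl
      · rw [if_neg (by
          rw [List.getLast?_singleton]
          intro hz
          exact hc (by rw [Option.some_inj] at hz; exact ⟨by rw [hz], by rw [hz]⟩))]
        show (if z.1 = x.1 ∧ z.2 = !x.2 then ([] : List (α × Bool)) else z :: x :: []) = _
        rw [if_neg hc]
    · have hy : ¬(z.1 = y.1 ∧ z.2 = !y.2) := hnc y (by simp)
      have hgl : (z :: y :: ys).getLast? = (y :: ys).getLast? := by
        rw [List.getLast?_cons_cons]
      rw [List.cons_append, FreeGroup.reduce.cons, IH]
      by_cases hc : (y :: ys).getLast? = some (x.1, !x.2)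
      · rw [if_pos hc, hgl, if_pos hc]
        rcases ys with _ | ⟨w, ws⟩
        · have : (y :: ([] : List (α × Bool))).dropLast = [] := rfl
          rw [this]
          rfl
        · have hdl : (y :: w :: ws).dropLast = y :: (w :: ws).dropLast := rfl
          rw [hdl]
          show (if z.1 = y.1 ∧ z.2 = !y.2 then (w :: ws).dropLast else z :: y :: (w :: ws).dropLast) = _
          rw [if_neg hy]
          rfl
      · rw [if_neg hc, hgl, if_neg hc]
        show (if z.1 = y.1 ∧ z.2 = !y.2 then ys ++ [x] else z :: y :: (ys ++ [x])) = _
        rw [if_neg hy]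
        rfl

lemma reduce_dropLast : ∀ (L : List (α × Bool)), FreeGroup.reduce L = L →
    FreeGroup.reduce L.dropLast = L.dropLast
  | [], _ => rfl
  | [z], _ => rfl
  | z :: y :: ys, h => by
    obtain ⟨hL, hnc⟩ := red_cons_aux h
    have IH := reduce_dropLast (y :: ys) hL
    have hy : ¬(z.1 = y.1 ∧ z.2 = !y.2) := hnc y (by simp)
    have hdl : (z :: y :: ys).dropLast = z :: (y :: ys).dropLast := rfl
    rw [hdl]
    rcases hys : (y :: ys).dropLast with _ | ⟨w, ws⟩
    · rfl
    · have hw : w = y := by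
        rcases ys with _ | ⟨u, us⟩
        · simp at hys
        · have : (y :: u :: us).dropLast = y :: (u :: us).dropLast := rfl
          rw [this] at hys
          injection hys with h1 _
          exact h1.symm
      rw [hys] at IH
      rw [FreeGroup.reduce.cons, IH]
      show (if z.1 = w.1 ∧ z.2 = !w.2 then ws else z :: w :: ws) = _
      rw [if_neg (hw ▸ hy)]

lemma toWord_mul_single (x : FreeGroup α) (ab : α × Bool) :
    (x * FreeGroup.mk [ab]).toWord =
      if x.toWord.getLast? = some (ab.1, !ab.2) then x.toWord.dropLast
      else x.toWord ++ [ab] := by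
  conv_lhs => rw [← FreeGroup.mk_toWord (x := x)]
  rw [FreeGroup.mul_mk, FreeGroup.toWord_mk, reduce_append ab _ (FreeGroup.reduce_toWord x)]

lemma mem_sphere {k n : ℕ} {x : FreeGroup (Fin k)} :
    x ∈ sphere k n ↔ x.toWord.length = n := by
  simp [sphere, Set.Finite.mem_toFinset]

lemma sphere_one (k : ℕ) :
    sphere k 1 = Finset.image (fun ab : Fin k × Bool => FreeGroup.mk [ab]) Finset.univ := by
  ext x
  simp only [mem_sphere, Finset.mem_image, Finset.mem_univ, true_and]
  constructor
  · intro h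
    obtain ⟨ab, hab⟩ := List.length_eq_one_iff.mp h
    exact ⟨ab, by rw [← FreeGroup.mk_toWord (x := x), hab]⟩
  · rintro ⟨ab, rfl⟩
    rw [FreeGroup.toWord_mk, FreeGroup.reduce_singleton]
    rfl

lemma mk_single_injective {k : ℕ} :
    Function.Injective (fun ab : Fin k × Bool => FreeGroup.mk [ab]) := by
  intro a b h
  have := congrArg FreeGroup.toWord h
  simp only [FreeGroup.toWord_mk, FreeGroup.reduce_singleton] at this
  injection this with h1 _

lemma phizero_of_odd {k : ℕ} {z : FreeGroup (Fin k)} (h : ¬ Even z.toWord.length) :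
    phizero k z = 0 := if_neg h

lemma phizero_of_even {k m : ℕ} {z : FreeGroup (Fin k)} (h : z.toWord.length = 2 * m) :
    phizero k z = (-1 : ℂ) ^ m / ((2 * k - 1 : ℕ) : ℂ) ^ m := by
  rw [phizero, if_pos (by rw [h]; exact even_two_mul m), h]
  congr 1 <;> congr 1 <;> omega

lemma conv_zero (k : ℕ) (hk : 2 ≤ k) (x : FreeGroup (Fin k)) :
    ∑ y ∈ sphere k 1, phizero k (x * y) = 0 := by
  rw [sphere_one, Finset.sum_image (fun a _ b _ h => mk_single_injective h)]
  by_cases hpar : Even x.toWord.length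
  · apply Finset.sum_eq_zero
    intro ab _
    apply phizero_of_odd
    rw [toWord_mul_single]
    by_cases hc : x.toWord.getLast? = some (ab.1, !ab.2)
    · rw [if_pos hc]
      have hne : x.toWord ≠ [] := by rintro h; rw [h] at hc; simp at hc
      have h1 : 1 ≤ x.toWord.length := List.length_pos_iff.mpr hne
      rw [List.length_dropLast]
      rcases hpar with ⟨m, hm⟩
      rintro ⟨j, hj⟩
      omega
    · rw [if_neg hc, List.length_append]
      rcases hpar with ⟨m, hm⟩
      rintro ⟨j, hj⟩
      simp only [List.length_singleton] at hj
      omega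
  · have hodd : Odd x.toWord.length := Nat.not_even_iff_odd.mp hpar
    obtain ⟨m, hm⟩ := hodd
    have hne : x.toWord ≠ [] := by intro h; rw [h] at hm; simp at hm
    have hgl : x.toWord.getLast? = some (x.toWord.getLast hne) :=
      List.getLast?_eq_getLast hne
    set bad : Fin k × Bool := ((x.toWord.getLast hne).1, !(x.toWord.getLast hne).2) with hbad
    have hcond : ∀ ab : Fin k × Bool,
        (x.toWord.getLast? = some (ab.1, !ab.2)) ↔ ab = bad := by
      intro ab
      rw [hgl, Option.some_inj]
      constructor
      · intro h
        have h1 : (x.toWord.getLast hne).1 = ab.1 := by rw [h]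
        have h2 : (x.toWord.getLast hne).2 = !ab.2 := by rw [h]
        apply Prod.ext
        · rw [hbad, ← h1]
        · rw [hbad]; simp [h2]
      · rintro rfl
        apply Prod.ext <;> simp [hbad]
    rw [← Finset.add_sum_erase _ _ (Finset.mem_univ bad)]
    have hterm_bad : phizero k (x * FreeGroup.mk [bad]) =
        (-1 : ℂ) ^ m / ((2 * k - 1 : ℕ) : ℂ) ^ m := by
      apply phizero_of_even
      rw [toWord_mul_single, if_pos ((hcond bad).mpr rfl), List.length_dropLast]
      omega
    have hterm : ∀ ab ∈ Finset.univ.erase bad,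
        phizero k (x * FreeGroup.mk [ab]) =
          (-1 : ℂ) ^ (m + 1) / ((2 * k - 1 : ℕ) : ℂ) ^ (m + 1) := by
      intro ab hab
      have hne' : ab ≠ bad := (Finset.mem_erase.mp hab).1
      apply phizero_of_even
      rw [toWord_mul_single, if_neg (fun h => hne' ((hcond ab).mp h)), List.length_append]
      simp only [List.length_singleton]
      omega
    rw [hterm_bad, Finset.sum_congr rfl hterm, Finset.sum_const, Finset.card_erase_of_mem
      (Finset.mem_univ bad)]
    have hcard : (Finset.univ : Finset (Fin k × Bool)).card = 2 * k := by
      simp [Fintype.card_prod]; ring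
    rw [hcard]
    have hc : ((2 * k - 1 : ℕ) : ℂ) ≠ 0 := Nat.cast_ne_zero.mpr (by omega)
    rw [nsmul_eq_mul, pow_succ, pow_succ]
    have key : ∀ a c : ℂ, c ≠ 0 → c ^ m ≠ 0 →
        a / c ^ m + c * (a * -1 / (c ^ m * c)) = 0 := by
      intro a c h1 h2
      field_simp
      ring
    exact key ((-1 : ℂ) ^ m) _ hc (pow_ne_zero m hc)

lemma sphere_card_step (k n : ℕ) :
    (sphere k (n + 2)).card ≤ (sphere k (n + 1)).card * (2 * k - 1) := by
  classical
  set E : FreeGroup (Fin k) → Finset (FreeGroup (Fin k)) := fun v =>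
    Finset.image (fun ab => v * FreeGroup.mk [ab])
      (Finset.filter (fun ab : Fin k × Bool => v.toWord.getLast? ≠ some (ab.1, !ab.2))
        Finset.univ) with hE
  have hsub : sphere k (n + 2) ⊆ (sphere k (n + 1)).biUnion E := by
    intro w hw
    rw [mem_sphere] at hw
    have hne : w.toWord ≠ [] := by intro h; rw [h] at hw; simp at hw
    have hred : FreeGroup.reduce w.toWord = w.toWord := FreeGroup.reduce_toWord w
    set v : FreeGroup (Fin k) := FreeGroup.mk w.toWord.dropLast with hv
    have hvw : v.toWord = w.toWord.dropLast := by
      rw [hv, FreeGroup.toWord_mk, reduce_dropLast _ hred]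
    have hvmem : v ∈ sphere k (n + 1) := by
      rw [mem_sphere, hvw, List.length_dropLast, hw]
      omega
    have hvne : v.toWord ≠ [] := by
      rw [hvw]
      intro h
      have := congrArg List.length h
      rw [List.length_dropLast, hw] at this
      simp at this
    rw [Finset.mem_biUnion]
    refine ⟨v, hvmem, ?_⟩
    rw [hE, Finset.mem_image]
    refine ⟨w.toWord.getLast hne, ?_, ?_⟩
    · rw [Finset.mem_filter]
      refine ⟨Finset.mem_univ _, ?_⟩
      intro hcon
      rw [hvw] at hcon
      set ab := w.toWord.getLast hne with hab
      obtain ⟨ys, hys⟩ := List.getLast?_eq_some_iff.mp hcon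
      have h1 := List.dropLast_append_getLast hne
      have hlast : w.toWord.getLast hne = (ab.1, !(!ab.2)) := by
        rw [← hab, Bool.not_not]
      have hdec : w.toWord = ys ++ (ab.1, !ab.2) :: (ab.1, !(!ab.2)) :: [] := by
        rw [← h1, hys, List.append_assoc, hlast]
        rfl
      exact FreeGroup.reduce.not (L₂ := ys) (L₃ := []) (hred.trans hdec)
    · rw [hv, FreeGroup.mul_mk, List.dropLast_append_getLast hne, FreeGroup.mk_toWord]
  calc (sphere k (n + 2)).card ≤ ((sphere k (n + 1)).biUnion E).card :=
        Finset.card_le_card hsub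
    _ ≤ (sphere k (n + 1)).card * (2 * k - 1) := by
        apply Finset.card_biUnion_le_card_mul
        intro v hv
        rw [mem_sphere] at hv
        have hvne : v.toWord ≠ [] := by intro h; rw [h] at hv; simp at hv
        apply (Finset.card_image_le).trans
        have hsub2 : Finset.filter
            (fun ab : Fin k × Bool => v.toWord.getLast? ≠ some (ab.1, !ab.2)) Finset.univ
            ⊆ Finset.univ.erase ((v.toWord.getLast hvne).1, !(v.toWord.getLast hvne).2) := by
          intro ab hab
          rw [Finset.mem_filter] at hab
          rw [Finset.mem_erase]
          refine ⟨?_, Finset.mem_univ _⟩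
          rintro rfl
          exact hab.2 (by rw [List.getLast?_eq_getLast hvne]; simp)
        apply (Finset.card_le_card hsub2).trans
        rw [Finset.card_erase_of_mem (Finset.mem_univ _)]
        have : (Finset.univ : Finset (Fin k × Bool)).card = 2 * k := by
          simp [Fintype.card_prod]; ring
        omega

lemma sphere_card_le (k : ℕ) (hk : 1 ≤ k) : ∀ n : ℕ,
    (sphere k n).card ≤ 2 * k * (2 * k - 1) ^ n
  | 0 => by
      have : sphere k 0 ⊆ {1} := by
        intro x hx
        rw [mem_sphere] at hx
        rw [Finset.mem_singleton, ← FreeGroup.norm_eq_zero]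
        exact hx
      have := Finset.card_le_card this
      simp at this
      simpa using this.trans (by omega)
  | 1 => by
      rw [sphere_one]
      apply Finset.card_image_le.trans
      have : (Finset.univ : Finset (Fin k × Bool)).card = 2 * k := by
        simp [Fintype.card_prod]; ring
      rw [this]
      nlinarith [pow_pos (by omega : 0 < 2 * k - 1) 1]
  | (n + 2) => by
      calc (sphere k (n + 2)).card ≤ (sphere k (n + 1)).card * (2 * k - 1) :=
            sphere_card_step k n
        _ ≤ 2 * k * (2 * k - 1) ^ (n + 1) * (2 * k - 1) :=
            Nat.mul_le_mul_right _ (sphere_card_le k hk (n + 1))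
        _ = 2 * k * (2 * k - 1) ^ (n + 2) := by ring

lemma summable_geom_part (k : ℕ) (hk : 2 ≤ k) {t : ℝ} (ht0 : 0 ≤ t)
    (hs1 : ((2 * k - 1 : ℕ) : ℝ) * t < 1) :
    Summable (fun x : FreeGroup (Fin k) => t ^ x.toWord.length) := by
  set b : ℝ := ((2 * k - 1 : ℕ) : ℝ) with hbdef
  have hb0 : 0 ≤ b := Nat.cast_nonneg _
  set s : ℝ := b * t with hsdef
  have hs0 : 0 ≤ s := mul_nonneg hb0 ht0
  apply summable_of_sum_le (c := (2 * k : ℝ) * (1 - s)⁻¹)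
    (fun x => pow_nonneg ht0 _)
  intro u
  set N := u.sup (fun x => x.toWord.length) with hN
  have hsub : u ⊆ (Finset.range (N + 1)).biUnion (sphere k) := by
    intro x hx
    rw [Finset.mem_biUnion]
    exact ⟨x.toWord.length, Finset.mem_range.mpr (Nat.lt_succ_of_le
      (Finset.le_sup (f := fun x => x.toWord.length) hx)), mem_sphere.mpr rfl⟩
  have hdisj : ((Finset.range (N + 1) : Finset ℕ) : Set ℕ).PairwiseDisjoint (sphere k) := by
    intro i _ j _ hij
    rw [Function.onFun, Finset.disjoint_left]
    intro x hxi hxj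
    exact hij ((mem_sphere.mp hxi).symm.trans (mem_sphere.mp hxj))
  calc ∑ x ∈ u, t ^ x.toWord.length
      ≤ ∑ x ∈ (Finset.range (N + 1)).biUnion (sphere k), t ^ x.toWord.length :=
        Finset.sum_le_sum_of_subset_of_nonneg hsub (fun x _ _ => pow_nonneg ht0 _)
    _ = ∑ n ∈ Finset.range (N + 1), ∑ x ∈ sphere k n, t ^ x.toWord.length :=
        Finset.sum_biUnion hdisj
    _ = ∑ n ∈ Finset.range (N + 1), ((sphere k n).card : ℝ) * t ^ n := by
        apply Finset.sum_congr rfl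
        intro n _
        rw [Finset.sum_congr rfl (fun x hx => by rw [mem_sphere.mp hx]),
          Finset.sum_const, nsmul_eq_mul]
    _ ≤ ∑ n ∈ Finset.range (N + 1), ((2 * k * (2 * k - 1) ^ n : ℕ) : ℝ) * t ^ n := by
        apply Finset.sum_le_sum
        intro n _
        exact mul_le_mul_of_nonneg_right
          (Nat.cast_le.mpr (sphere_card_le k (by omega) n)) (pow_nonneg ht0 n)
    _ = (2 * k : ℝ) * ∑ n ∈ Finset.range (N + 1), s ^ n := by
        rw [Finset.mul_sum]
        apply Finset.sum_congr rfl
        intro n _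
        rw [hsdef, mul_pow]
        push_cast
        ring
    _ ≤ (2 * k : ℝ) * (1 - s)⁻¹ := by
        apply mul_le_mul_of_nonneg_left _ (by positivity)
        rw [← tsum_geometric_of_lt_one hs0 (hsdef ▸ hs1)]
        exact Summable.sum_le_tsum _ (fun i _ => pow_nonneg hs0 i)
          (summable_geometric_of_lt_one hs0 (hsdef ▸ hs1))

lemma summable_phizero (k : ℕ) (hk : 2 ≤ k) (q : ℝ) (hq : 2 < q) :
    Summable (fun x : FreeGroup (Fin k) => ‖phizero k x‖ ^ q) := by
  set b : ℝ := ((2 * k - 1 : ℕ) : ℝ) with hbdef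
  have hb1 : 1 < b := by
    rw [hbdef]
    exact_mod_cast (by omega : 1 < 2 * k - 1)
  have hb0 : (0 : ℝ) < b := lt_trans one_pos hb1
  set t : ℝ := b ^ (-(q / 2)) with htdef
  have ht0 : 0 ≤ t := Real.rpow_nonneg hb0.le _
  have hs1 : b * t < 1 := by
    have : b * t = b ^ (1 + -(q / 2)) := by
      rw [Real.rpow_add hb0, Real.rpow_one]
    rw [this]
    exact Real.rpow_lt_one_of_one_lt_of_neg hb1 (by linarith)
  have hle : ∀ x : FreeGroup (Fin k),
      ‖phizero k x‖ ^ q ≤ t ^ x.toWord.length := by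
    intro x
    by_cases hpar : Even x.toWord.length
    · obtain ⟨m, hm⟩ := hpar
      have hm' : x.toWord.length = 2 * m := by omega
      rw [phizero_of_even hm']
      have habs : ‖(-1 : ℂ) ^ m / ((2 * k - 1 : ℕ) : ℂ) ^ m‖ = (b ^ m)⁻¹ := by
        rw [norm_div, norm_pow, norm_pow, norm_neg]
        simp [hbdef, one_div]
      rw [habs, hm']
      have h1 : (b ^ m)⁻¹ = b ^ (-(m : ℝ)) := by
        rw [← Real.rpow_natCast b m, ← Real.rpow_neg hb0.le]
      have key : ((b ^ m)⁻¹) ^ q = t ^ (2 * m) := by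
        calc ((b ^ m)⁻¹) ^ q = b ^ (-(m : ℝ) * q) := by
              rw [h1, ← Real.rpow_mul hb0.le]
          _ = t ^ (2 * m) := by
              rw [htdef, ← Real.rpow_natCast (b ^ (-(q / 2))) (2 * m),
                ← Real.rpow_mul hb0.le]
              congr 1
              push_cast
              ring
      exact le_of_eq key
    · rw [phizero_of_odd hpar, norm_zero, Real.zero_rpow (by positivity)]
      exact pow_nonneg ht0 _
  exact Summable.of_nonneg_of_le
    (fun x => Real.rpow_nonneg (norm_nonneg _) q) hle
    (summable_geom_part k hk ht0 hs1)

end Helpers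

/-- `φ_0 ∈ ℓ^p(F_k)` for every `p > 2`, and `χ_1 ∗ φ_0 = 0`,
i.e. `∑_{y ∈ E_1} φ_0(xy) = 0` for all `x`. -/
theorem stmt14 (k : ℕ) (hk : 2 ≤ k) :
    (∀ q : ℝ, 2 < q →
      Summable (fun x : FreeGroup (Fin k) => ‖phizero k x‖ ^ q)) ∧
    (∀ x : FreeGroup (Fin k), ∑ y ∈ sphere k 1, phizero k (x * y) = 0) := by
  exact ⟨fun q hq => summable_phizero k hk q hq, conv_zero k hk⟩
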